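/- Let Z be a random element of a measurable space with law π and let A : Z → ℝ^{d×d} be measurable with E[‖A(Z)‖²] < ∞. Let a, L > 0 and assume that a·I ⪯ E[(A(Z) + A(Z)ᵀ)/2] and (1/L)·E[A(Z)ᵀ A(Z)] ⪯ E[(A(Z) + A(Z)ᵀ)/2] in the positive-semidefinite (Loewner) order. Then for every η ≥ 0 and every u ∈ ℝ^d, E[‖(I − η A(Z)) u‖²] ≤ (1 − ηa)‖u‖² − η(1/L − η)·E[‖A(Z)u‖²]. -/

import Mathlib

open MeasureTheory
open scoped RealInnerProductSpace

set_option maxHeartbeats 1000000 in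
set_option synthInstance.maxHeartbeats 100000 in
lemma one_step_contraction_aux
    {Zsp : Type} [MeasurableSpace Zsp] (π : Measure Zsp) [IsProbabilityMeasure π]
    {E : Type*} [NormedAddCommGroup E] [InnerProductSpace ℝ E] [CompleteSpace E]
    (A : Zsp → (E →L[ℝ] E))
    (hAmeas : AEStronglyMeasurable A π)
    (hA2 : Integrable (fun z => ‖A z‖ ^ 2) π)
    (a L : ℝ) (ha : 0 < a) (hL : 0 < L)
    (hlow : ∀ u : E,
      a * ‖u‖ ^ 2 ≤
        ⟪u, (∫ z, (2 : ℝ)⁻¹ • (A z + ContinuousLinearMap.adjoint (A z)) ∂π) u⟫)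
    (hup : ∀ u : E,
      (1 / L) * ⟪u, (∫ z, (ContinuousLinearMap.adjoint (A z)).comp (A z) ∂π) u⟫ ≤
        ⟪u, (∫ z, (2 : ℝ)⁻¹ • (A z + ContinuousLinearMap.adjoint (A z)) ∂π) u⟫) :
    ∀ η : ℝ, 0 ≤ η → ∀ u : E,
      (∫ z, ‖((1 : E →L[ℝ] E) - η • A z) u‖ ^ 2 ∂π) ≤
        (1 - η * a) * ‖u‖ ^ 2 - η * (1 / L - η) * ∫ z, ‖A z u‖ ^ 2 ∂π := by
  intro η hη u
  -- Integrability of A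
  have hAint : Integrable A π := by
    refine (hA2.add (integrable_const 1)).mono' hAmeas ?_
    filter_upwards with z
    simp only [Pi.add_apply]
    nlinarith [norm_nonneg (A z), sq_nonneg (‖A z‖ - 1)]
  have hadjcont : Continuous (fun T : E →L[ℝ] E => ContinuousLinearMap.adjoint T) :=
    (ContinuousLinearMap.adjoint : (E →L[ℝ] E) ≃ₗᵢ⋆[ℝ] (E →L[ℝ] E)).continuous
  have hadj_meas : AEStronglyMeasurable (fun z => ContinuousLinearMap.adjoint (A z)) π :=
    hadjcont.comp_aestronglyMeasurable hAmeas
  have hadjint : Integrable (fun z => ContinuousLinearMap.adjoint (A z)) π := by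
    refine hAint.norm.mono' hadj_meas ?_
    filter_upwards with z
    simp [(ContinuousLinearMap.adjoint : (E →L[ℝ] E) ≃ₗᵢ⋆[ℝ] (E →L[ℝ] E)).norm_map (A z)]
  have hSint : Integrable (fun z => (2 : ℝ)⁻¹ • (A z + ContinuousLinearMap.adjoint (A z))) π := by
    have h := (Integrable.add (f := A) (g := fun z => ContinuousLinearMap.adjoint (A z)) hAint hadjint).smul ((2:ℝ)⁻¹)
    exact h
  have hQmeas : AEStronglyMeasurable (fun z => (ContinuousLinearMap.adjoint (A z)).comp (A z)) π := by
    exact (ContinuousLinearMap.compL ℝ E E E).continuous₂.comp_aestronglyMeasurable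
      (hadj_meas.prodMk hAmeas)
  have hQint : Integrable (fun z => (ContinuousLinearMap.adjoint (A z)).comp (A z)) π := by
    refine hA2.mono' hQmeas ?_
    filter_upwards with z
    calc ‖(ContinuousLinearMap.adjoint (A z)).comp (A z)‖
        ≤ ‖ContinuousLinearMap.adjoint (A z)‖ * ‖A z‖ := ContinuousLinearMap.opNorm_comp_le _ _
      _ = ‖A z‖ ^ 2 := by
          rw [(ContinuousLinearMap.adjoint : (E →L[ℝ] E) ≃ₗᵢ⋆[ℝ] (E →L[ℝ] E)).norm_map (A z)]
          ring
  -- pointwise integrable scalar functions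
  have hAu_int : Integrable (fun z => (A z) u) π := hAint.apply_continuousLinearMap u
  have hinner_int : Integrable (fun z => ⟪u, (A z) u⟫) π := by
    refine (hAint.norm.const_mul (‖u‖^2)).mono' ?_ ?_
    · exact (continuous_inner.comp_aestronglyMeasurable
        ((aestronglyMeasurable_const : AEStronglyMeasurable (fun _ => u) π).prodMk hAu_int.1))
    · filter_upwards with z
      calc ‖⟪u, (A z) u⟫‖ ≤ ‖u‖ * ‖(A z) u‖ := norm_inner_le_norm _ _
        _ ≤ ‖u‖ * (‖A z‖ * ‖u‖) :=
            mul_le_mul_of_nonneg_left ((A z).le_opNorm u) (norm_nonneg u)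
        _ = ‖u‖^2 * ‖A z‖ := by ring
  have hnormsq_int : Integrable (fun z => ‖(A z) u‖ ^ 2) π := by
    refine (hA2.const_mul (‖u‖^2)).mono' ?_ ?_
    · exact (continuous_norm.comp_aestronglyMeasurable hAu_int.1).pow 2
    · filter_upwards with z
      have h1 : ‖(A z) u‖ ≤ ‖A z‖ * ‖u‖ := (A z).le_opNorm u
      have h2 : ‖(A z) u‖^2 ≤ ‖u‖^2 * ‖A z‖^2 := by
        nlinarith [norm_nonneg ((A z) u), norm_nonneg (A z), norm_nonneg u]
      calc ‖‖(A z) u‖ ^ 2‖ = ‖(A z) u‖^2 := by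
            rw [Real.norm_eq_abs, abs_of_nonneg (sq_nonneg _)]
        _ ≤ ‖u‖^2 * ‖A z‖^2 := h2
  -- pointwise expansion
  have hpt : ∀ z, ‖((1 : E →L[ℝ] E) - η • A z) u‖ ^ 2
      = ‖u‖^2 - 2*η*⟪u, (A z) u⟫ + η^2 * ‖(A z) u‖^2 := by
    intro z
    have h0 : ((1 : E →L[ℝ] E) - η • A z) u = u - η • (A z) u := by simp
    rw [h0, @norm_sub_sq_real, real_inner_smul_right, norm_smul]
    simp only [Real.norm_eq_abs, mul_pow, sq_abs]
    ring
  -- split the integral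
  have hsplit : (∫ z, ‖((1 : E →L[ℝ] E) - η • A z) u‖ ^ 2 ∂π)
      = ‖u‖^2 - 2*η*(∫ z, ⟪u, (A z) u⟫ ∂π) + η^2 * ∫ z, ‖(A z) u‖^2 ∂π := by
    simp_rw [hpt]
    have hI0 : Integrable (fun z => 2 * η * ⟪u, (A z) u⟫) π := hinner_int.const_mul _
    have hI1 : Integrable (fun z => ‖u‖^2 - 2 * η * ⟪u, (A z) u⟫) π :=
      (integrable_const _).sub hI0
    have hI2 : Integrable (fun z => η^2 * ‖(A z) u‖^2) π := hnormsq_int.const_mul _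
    rw [integral_add hI1 hI2, integral_sub (integrable_const _) hI0,
      integral_const, integral_const_mul, integral_const_mul]
    simp
  -- identify the two integrals with quadratic forms
  have hXeq : ⟪u, (∫ z, (2 : ℝ)⁻¹ • (A z + ContinuousLinearMap.adjoint (A z)) ∂π) u⟫
      = ∫ z, ⟪u, (A z) u⟫ ∂π := by
    rw [ContinuousLinearMap.integral_apply hSint,
      ← integral_inner (hSint.apply_continuousLinearMap u)]
    congr 1
    funext z
    have : ⟪u, ((2 : ℝ)⁻¹ • (A z + ContinuousLinearMap.adjoint (A z))) u⟫
        = (2:ℝ)⁻¹ * (⟪u, (A z) u⟫ + ⟪u, (ContinuousLinearMap.adjoint (A z)) u⟫) := by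
      simp [real_inner_smul_right, inner_add_right, mul_add]
    rw [this, ContinuousLinearMap.adjoint_inner_right, real_inner_comm ((A z) u) u]
    ring
  have hYeq : ⟪u, (∫ z, (ContinuousLinearMap.adjoint (A z)).comp (A z) ∂π) u⟫
      = ∫ z, ‖(A z) u‖^2 ∂π := by
    rw [ContinuousLinearMap.integral_apply hQint,
      ← integral_inner (hQint.apply_continuousLinearMap u)]
    congr 1
    funext z
    rw [ContinuousLinearMap.comp_apply, ContinuousLinearMap.adjoint_inner_right,
      real_inner_self_eq_norm_sq]
  rw [hsplit]
  have h1 := hlow u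
  have h2 := hup u
  rw [hXeq] at h1 h2
  rw [hYeq] at h2
  nlinarith [mul_le_mul_of_nonneg_left h1 hη, mul_le_mul_of_nonneg_left h2 hη]

/-- Under the Loewner-order hypotheses
`a·I ⪯ E[(A(Z) + A(Z)ᵀ)/2]` and `(1/L)·E[A(Z)ᵀA(Z)] ⪯ E[(A(Z) + A(Z)ᵀ)/2]`,
for every `η ≥ 0` and every `u ∈ ℝ^d`,
`E[‖(I − ηA(Z))u‖²] ≤ (1 − ηa)‖u‖² − η(1/L − η) E[‖A(Z)u‖²]`. -/
theorem one_step_contraction_with_La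
    (d : ℕ) (hd : 1 ≤ d)
    {Zsp : Type} [MeasurableSpace Zsp] (π : Measure Zsp) [IsProbabilityMeasure π]
    (A : Zsp → (EuclideanSpace ℝ (Fin d) →L[ℝ] EuclideanSpace ℝ (Fin d)))
    (hAmeas : AEStronglyMeasurable A π)
    (hA2 : Integrable (fun z => ‖A z‖ ^ 2) π)
    (a L : ℝ) (ha : 0 < a) (hL : 0 < L)
    (hlow : ∀ u : EuclideanSpace ℝ (Fin d),
      a * ‖u‖ ^ 2 ≤
        ⟪u, (∫ z, (2 : ℝ)⁻¹ • (A z + ContinuousLinearMap.adjoint (A z)) ∂π) u⟫)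
    (hup : ∀ u : EuclideanSpace ℝ (Fin d),
      (1 / L) * ⟪u, (∫ z, (ContinuousLinearMap.adjoint (A z)).comp (A z) ∂π) u⟫ ≤
        ⟪u, (∫ z, (2 : ℝ)⁻¹ • (A z + ContinuousLinearMap.adjoint (A z)) ∂π) u⟫) :
    ∀ η : ℝ, 0 ≤ η → ∀ u : EuclideanSpace ℝ (Fin d),
      (∫ z, ‖((1 : EuclideanSpace ℝ (Fin d) →L[ℝ] EuclideanSpace ℝ (Fin d))
          - η • A z) u‖ ^ 2 ∂π) ≤
        (1 - η * a) * ‖u‖ ^ 2 - η * (1 / L - η) * ∫ z, ‖A z u‖ ^ 2 ∂π :=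
  one_step_contraction_aux π A hAmeas hA2 a L ha hL hlow hup
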